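/- On a Hermitian vector space (V,g,J) of real dimension 2m, the tensor I_ℂ defined by I_ℂ(X,Y,Z,W) = (1/4)[I(X,Y,Z,W) + I(JX,JY,Z,W) + 2g(JX,Y)g(JZ,W)], with I(X,Y,Z,W) = g(X,Z)g(Y,W) - g(Y,Z)g(X,W), is the orthogonal projection of I onto the subspace of Kähler curvature-type tensors: I_ℂ is of Kähler type (I_ℂ(X,Y,JZ,JW) = I_ℂ(X,Y,Z,W)), and for every algebraic curvature tensor T of Kähler type, ⟨I - I_ℂ, T⟩ = 0. -/

import Mathlib

section Aux

variable {V : Type*} [NormedAddCommGroup V] [InnerProductSpace ℝ V]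
variable {ι : Type*} [Fintype ι]

private lemma aux_repr (b : OrthonormalBasis ι ℝ V) (x : V) :
    ∑ k, (inner ℝ x (b k) : ℝ) • b k = x := by
  simpa [real_inner_comm] using b.sum_repr' x

private lemma aux_collapse (b : OrthonormalBasis ι ℝ V) (L : V →ₗ[ℝ] ℝ) (x : V) :
    ∑ k, (inner ℝ x (b k) : ℝ) * L (b k) = L x := by
  calc ∑ k, (inner ℝ x (b k) : ℝ) * L (b k)
      = ∑ k, L ((inner ℝ x (b k) : ℝ) • b k) := by simp [smul_eq_mul]
    _ = L (∑ k, (inner ℝ x (b k) : ℝ) • b k) := (map_sum L _ _).symm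
    _ = L x := by rw [aux_repr]

variable (T : MultilinearMap ℝ (fun _ : Fin 4 => V) ℝ)

private lemma slot1 (c d e x : V) : (T.toLinearMap ![0, c, d, e] 0) x = T ![x, c, d, e] := by
  simp only [MultilinearMap.toLinearMap_apply]
  congr 1; funext i; fin_cases i <;> simp [Function.update]

private lemma slot2 (a c d x : V) : (T.toLinearMap ![a, 0, c, d] 1) x = T ![a, x, c, d] := by
  simp only [MultilinearMap.toLinearMap_apply]
  congr 1; funext i; fin_cases i <;> simp [Function.update]

private lemma slot3 (a c d x : V) : (T.toLinearMap ![a, c, 0, d] 2) x = T ![a, c, x, d] := by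
  simp only [MultilinearMap.toLinearMap_apply]
  congr 1; funext i; fin_cases i <;> simp [Function.update]

private lemma slot4 (a c d x : V) : (T.toLinearMap ![a, c, d, 0] 3) x = T ![a, c, d, x] := by
  simp only [MultilinearMap.toLinearMap_apply]
  congr 1; funext i; fin_cases i <;> simp [Function.update]

private lemma col1 (b : OrthonormalBasis ι ℝ V) (c d e x : V) :
    ∑ k, (inner ℝ x (b k) : ℝ) * T ![b k, c, d, e] = T ![x, c, d, e] := by
  simpa only [slot1] using aux_collapse b (T.toLinearMap ![0, c, d, e] 0) x

private lemma col2 (b : OrthonormalBasis ι ℝ V) (a c d x : V) :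
    ∑ k, (inner ℝ x (b k) : ℝ) * T ![a, b k, c, d] = T ![a, x, c, d] := by
  simpa only [slot2] using aux_collapse b (T.toLinearMap ![a, 0, c, d] 1) x

private lemma col3 (b : OrthonormalBasis ι ℝ V) (a c d x : V) :
    ∑ k, (inner ℝ x (b k) : ℝ) * T ![a, c, b k, d] = T ![a, c, x, d] := by
  simpa only [slot3] using aux_collapse b (T.toLinearMap ![a, c, 0, d] 2) x

private lemma col4 (b : OrthonormalBasis ι ℝ V) (a c d x : V) :
    ∑ k, (inner ℝ x (b k) : ℝ) * T ![a, c, d, b k] = T ![a, c, d, x] := by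
  simpa only [slot4] using aux_collapse b (T.toLinearMap ![a, c, d, 0] 3) x

private lemma col3J (b : OrthonormalBasis ι ℝ V) (J : V →ₗ[ℝ] V) (a c d x : V) :
    ∑ k, (inner ℝ x (b k) : ℝ) * T ![a, c, J (b k), d] = T ![a, c, J x, d] := by
  simpa only [LinearMap.comp_apply, slot3] using
    aux_collapse b ((T.toLinearMap ![a, c, 0, d] 2).comp J) x

private lemma negslot3 (a c d x : V) : T ![a, c, -x, d] = -T ![a, c, x, d] := by
  have h := (T.toLinearMap ![a, c, 0, d] 2).map_neg x
  simpa only [slot3] using h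

end Aux

/-- On a Hermitian vector space `(V, g, J)`, the tensor `I_ℂ` is the orthogonal
projection of `I` onto the space of Kähler curvature-type tensors: `I_ℂ` is of Kähler
type, and `⟨I - I_ℂ, T⟩ = 0` for every algebraic curvature tensor `T` of Kähler type,
where `⟨S,T⟩ = Σ S(e_i,e_j,e_k,e_l) T(e_i,e_j,e_k,e_l)` over an orthonormal basis. -/
theorem IC_is_orthogonal_projection_of_I
    {V : Type*} [NormedAddCommGroup V] [InnerProductSpace ℝ V]
    {ι : Type*} [Fintype ι] (b : OrthonormalBasis ι ℝ V)
    (J : V →ₗ[ℝ] V) (hJ2 : ∀ x, J (J x) = -x)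
    (hJiso : ∀ x y : V, (inner ℝ (J x) (J y) : ℝ) = inner ℝ x y)
    (T : MultilinearMap ℝ (fun _ : Fin 4 => V) ℝ)
    (hT1 : ∀ X Y Z W : V, T ![X, Y, Z, W] = -T ![Y, X, Z, W])
    (hT2 : ∀ X Y Z W : V, T ![X, Y, Z, W] = -T ![X, Y, W, Z])
    (hT3 : ∀ X Y Z W : V, T ![X, Y, Z, W] = T ![Z, W, X, Y])
    (hTbianchi : ∀ X Y Z W : V,
      T ![X, Y, Z, W] + T ![Y, Z, X, W] + T ![Z, X, Y, W] = 0)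
    (hKaehler : ∀ X Y Z W : V, T ![X, Y, J Z, J W] = T ![X, Y, Z, W]) :
    let g : V → V → ℝ := fun x y => inner ℝ x y
    let Ifun : V → V → V → V → ℝ := fun X Y Z W => g X Z * g Y W - g Y Z * g X W
    let ICfun : V → V → V → V → ℝ := fun X Y Z W =>
      (4 : ℝ)⁻¹ * (Ifun X Y Z W + Ifun (J X) (J Y) Z W + 2 * g (J X) Y * g (J Z) W)
    (∀ X Y Z W : V, ICfun X Y (J Z) (J W) = ICfun X Y Z W) ∧
    (∑ i, ∑ j, ∑ k, ∑ l,
      (Ifun (b i) (b j) (b k) (b l) - ICfun (b i) (b j) (b k) (b l)) *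
        T ![b i, b j, b k, b l]) = 0 := by
  have hskew : ∀ x y : V, (inner ℝ (J x) y : ℝ) = -(inner ℝ x (J y) : ℝ) := by
    intro x y
    have h := hJiso x (J y)
    rw [hJ2 y, inner_neg_right] at h
    linarith
  have hskew' : ∀ x y : V, (inner ℝ x (J y) : ℝ) = -(inner ℝ (J x) y : ℝ) := by
    intro x y; rw [hskew]; ring
  intro g Ifun ICfun
  constructor
  · -- Kähler type of I_ℂ
    intro X Y Z W
    simp only [ICfun, Ifun, g]
    simp only [hJiso, hJ2, map_neg, hskew', inner_neg_left, inner_neg_right]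
    ring
  · -- orthogonality
    -- abbreviations
    set S : ℝ := ∑ i, ∑ j, T ![b i, b j, b i, b j] with hSdef
    -- key 1 : ⟨I, T⟩ = 2 Scal
    have key1 : (∑ i, ∑ j, ∑ k, ∑ l,
        ((inner ℝ (b i) (b k) : ℝ) * (inner ℝ (b j) (b l) : ℝ)
          - (inner ℝ (b j) (b k) : ℝ) * (inner ℝ (b i) (b l) : ℝ)) * T ![b i, b j, b k, b l])
        = 2 * S := by
      have hij : ∀ i j, (∑ k, ∑ l,
          ((inner ℝ (b i) (b k) : ℝ) * (inner ℝ (b j) (b l) : ℝ)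
            - (inner ℝ (b j) (b k) : ℝ) * (inner ℝ (b i) (b l) : ℝ)) * T ![b i, b j, b k, b l])
          = 2 * T ![b i, b j, b i, b j] := by
        intro i j
        have hk : ∀ k, (∑ l,
            ((inner ℝ (b i) (b k) : ℝ) * (inner ℝ (b j) (b l) : ℝ)
              - (inner ℝ (b j) (b k) : ℝ) * (inner ℝ (b i) (b l) : ℝ)) * T ![b i, b j, b k, b l])
            = (inner ℝ (b i) (b k) : ℝ) * T ![b i, b j, b k, b j]
              - (inner ℝ (b j) (b k) : ℝ) * T ![b i, b j, b k, b i] := by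
          intro k
          have hpt : ∀ l, ((inner ℝ (b i) (b k) : ℝ) * (inner ℝ (b j) (b l) : ℝ)
              - (inner ℝ (b j) (b k) : ℝ) * (inner ℝ (b i) (b l) : ℝ)) * T ![b i, b j, b k, b l]
              = (inner ℝ (b i) (b k) : ℝ) * ((inner ℝ (b j) (b l) : ℝ) * T ![b i, b j, b k, b l])
                - (inner ℝ (b j) (b k) : ℝ)
                  * ((inner ℝ (b i) (b l) : ℝ) * T ![b i, b j, b k, b l]) := by
            intro l; ring
          rw [Finset.sum_congr rfl fun l _ => hpt l, Finset.sum_sub_distrib,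
            ← Finset.mul_sum, ← Finset.mul_sum, col4 T b, col4 T b]
        rw [Finset.sum_congr rfl fun k _ => hk k, Finset.sum_sub_distrib,
          col3 T b, col3 T b, hT2 (b i) (b j) (b j) (b i)]
        ring
      rw [Finset.sum_congr rfl fun i _ => Finset.sum_congr rfl fun j _ => hij i j, hSdef]
      simp only [Finset.mul_sum]
    -- key 2 : ⟨I(J·,J·,·,·), T⟩ = 2 Scal
    have key2 : (∑ i, ∑ j, ∑ k, ∑ l,
        ((inner ℝ (J (b i)) (b k) : ℝ) * (inner ℝ (J (b j)) (b l) : ℝ)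
          - (inner ℝ (J (b j)) (b k) : ℝ) * (inner ℝ (J (b i)) (b l) : ℝ))
          * T ![b i, b j, b k, b l]) = 2 * S := by
      have hij : ∀ i j, (∑ k, ∑ l,
          ((inner ℝ (J (b i)) (b k) : ℝ) * (inner ℝ (J (b j)) (b l) : ℝ)
            - (inner ℝ (J (b j)) (b k) : ℝ) * (inner ℝ (J (b i)) (b l) : ℝ))
            * T ![b i, b j, b k, b l])
          = 2 * T ![b i, b j, b i, b j] := by
        intro i j
        have hk : ∀ k, (∑ l,
            ((inner ℝ (J (b i)) (b k) : ℝ) * (inner ℝ (J (b j)) (b l) : ℝ)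
              - (inner ℝ (J (b j)) (b k) : ℝ) * (inner ℝ (J (b i)) (b l) : ℝ))
              * T ![b i, b j, b k, b l])
            = (inner ℝ (J (b i)) (b k) : ℝ) * T ![b i, b j, b k, J (b j)]
              - (inner ℝ (J (b j)) (b k) : ℝ) * T ![b i, b j, b k, J (b i)] := by
          intro k
          have hpt : ∀ l, ((inner ℝ (J (b i)) (b k) : ℝ) * (inner ℝ (J (b j)) (b l) : ℝ)
              - (inner ℝ (J (b j)) (b k) : ℝ) * (inner ℝ (J (b i)) (b l) : ℝ))
                * T ![b i, b j, b k, b l]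
              = (inner ℝ (J (b i)) (b k) : ℝ)
                  * ((inner ℝ (J (b j)) (b l) : ℝ) * T ![b i, b j, b k, b l])
                - (inner ℝ (J (b j)) (b k) : ℝ)
                  * ((inner ℝ (J (b i)) (b l) : ℝ) * T ![b i, b j, b k, b l]) := by
            intro l; ring
          rw [Finset.sum_congr rfl fun l _ => hpt l, Finset.sum_sub_distrib,
            ← Finset.mul_sum, ← Finset.mul_sum, col4 T b, col4 T b]
        rw [Finset.sum_congr rfl fun k _ => hk k, Finset.sum_sub_distrib,
          col3 T b, col3 T b, hKaehler (b i) (b j) (b i) (b j),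
          hKaehler (b i) (b j) (b j) (b i), hT2 (b i) (b j) (b j) (b i)]
        ring
      rw [Finset.sum_congr rfl fun i _ => Finset.sum_congr rfl fun j _ => hij i j, hSdef]
      simp only [Finset.mul_sum]
    -- claim C : ∑ i, T(J e_i, x, J e_i, y) = ∑ i, T(e_i, x, e_i, y)
    have claimC : ∀ x y : V,
        (∑ i, T ![J (b i), x, J (b i), y]) = ∑ i, T ![b i, x, b i, y] := by
      intro x y
      have e1 : ∀ i, T ![J (b i), x, J (b i), y]
          = ∑ j, (inner ℝ (J (b i)) (b j) : ℝ) * T ![b j, x, J (b i), y] :=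
        fun i => (col1 T b x (J (b i)) y (J (b i))).symm
      rw [Finset.sum_congr rfl fun i _ => e1 i, Finset.sum_comm]
      refine Finset.sum_congr rfl fun j _ => ?_
      have e2 : ∀ i, (inner ℝ (J (b i)) (b j) : ℝ) * T ![b j, x, J (b i), y]
          = -((inner ℝ (J (b j)) (b i) : ℝ) * T ![b j, x, J (b i), y]) := by
        intro i
        rw [hskew (b i) (b j), real_inner_comm (b i) (J (b j))]
        ring
      rw [Finset.sum_congr rfl fun i _ => e2 i, Finset.sum_neg_distrib,
        col3J T b J (b j) x y (J (b j)), hJ2 (b j), negslot3, neg_neg]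
    -- pointwise Bianchi consequence
    have ptw : ∀ X Y : V, T ![X, J X, Y, J Y] = T ![J X, Y, J X, Y] + T ![X, Y, X, Y] := by
      intro X Y
      have hb := hTbianchi X (J X) Y (J Y)
      have h1 : T ![Y, X, J X, J Y] = -T ![X, Y, X, Y] := by
        rw [hKaehler Y X X Y]; exact hT1 Y X X Y
      have h2 : T ![J X, Y, X, J Y] = -T ![J X, Y, J X, Y] := by
        have h3 := hKaehler (J X) Y (J X) Y
        rw [hJ2 X, negslot3] at h3
        linarith
      linarith
    -- key 3' : ∑_{ik} T(e_i, J e_i, e_k, J e_k) = 2 Scal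
    have key3' : (∑ i, ∑ k, T ![b i, J (b i), b k, J (b k)]) = 2 * S := by
      have stp : (∑ i, ∑ k, T ![J (b i), b k, J (b i), b k]) = S := by
        rw [Finset.sum_comm]
        calc (∑ k, ∑ i, T ![J (b i), b k, J (b i), b k])
            = ∑ k, ∑ i, T ![b i, b k, b i, b k] :=
              Finset.sum_congr rfl fun k _ => claimC (b k) (b k)
          _ = S := by rw [hSdef, Finset.sum_comm]
      calc (∑ i, ∑ k, T ![b i, J (b i), b k, J (b k)])
          = ∑ i, ∑ k, (T ![J (b i), b k, J (b i), b k] + T ![b i, b k, b i, b k]) :=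
            Finset.sum_congr rfl fun i _ => Finset.sum_congr rfl fun k _ => ptw (b i) (b k)
        _ = (∑ i, ∑ k, T ![J (b i), b k, J (b i), b k])
            + ∑ i, ∑ k, T ![b i, b k, b i, b k] := by
            simp [Finset.sum_add_distrib]
        _ = S + S := by rw [stp, hSdef]
        _ = 2 * S := by ring
    -- key 3 : ∑ g(Je_i,e_j) g(Je_k,e_l) T_{ijkl} = 2 Scal
    have key3 : (∑ i, ∑ j, ∑ k, ∑ l,
        ((inner ℝ (J (b i)) (b j) : ℝ) * (inner ℝ (J (b k)) (b l) : ℝ))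
          * T ![b i, b j, b k, b l]) = 2 * S := by
      have hfix : ∀ i k, (∑ j, ∑ l,
          ((inner ℝ (J (b i)) (b j) : ℝ) * (inner ℝ (J (b k)) (b l) : ℝ))
            * T ![b i, b j, b k, b l]) = T ![b i, J (b i), b k, J (b k)] := by
        intro i k
        have hl : ∀ j, (∑ l, ((inner ℝ (J (b i)) (b j) : ℝ) * (inner ℝ (J (b k)) (b l) : ℝ))
            * T ![b i, b j, b k, b l])
            = (inner ℝ (J (b i)) (b j) : ℝ) * T ![b i, b j, b k, J (b k)] := by
          intro j
          have hpt : ∀ l, ((inner ℝ (J (b i)) (b j) : ℝ) * (inner ℝ (J (b k)) (b l) : ℝ))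
              * T ![b i, b j, b k, b l]
              = (inner ℝ (J (b i)) (b j) : ℝ)
                  * ((inner ℝ (J (b k)) (b l) : ℝ) * T ![b i, b j, b k, b l]) := by
            intro l; ring
          rw [Finset.sum_congr rfl fun l _ => hpt l, ← Finset.mul_sum, col4 T b]
        rw [Finset.sum_congr rfl fun j _ => hl j, col2 T b]
      calc (∑ i, ∑ j, ∑ k, ∑ l,
          ((inner ℝ (J (b i)) (b j) : ℝ) * (inner ℝ (J (b k)) (b l) : ℝ))
            * T ![b i, b j, b k, b l])
          = ∑ i, ∑ k, ∑ j, ∑ l,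
            ((inner ℝ (J (b i)) (b j) : ℝ) * (inner ℝ (J (b k)) (b l) : ℝ))
              * T ![b i, b j, b k, b l] :=
            Finset.sum_congr rfl fun i _ => Finset.sum_comm
        _ = ∑ i, ∑ k, T ![b i, J (b i), b k, J (b k)] :=
            Finset.sum_congr rfl fun i _ => Finset.sum_congr rfl fun k _ => hfix i k
        _ = 2 * S := key3'
    -- assemble
    have ptwise : ∀ i j k l,
        (Ifun (b i) (b j) (b k) (b l) - ICfun (b i) (b j) (b k) (b l))
          * T ![b i, b j, b k, b l]
        = (3 / 4 : ℝ) * (((inner ℝ (b i) (b k) : ℝ) * (inner ℝ (b j) (b l) : ℝ)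
              - (inner ℝ (b j) (b k) : ℝ) * (inner ℝ (b i) (b l) : ℝ))
                * T ![b i, b j, b k, b l])
          - (4 : ℝ)⁻¹ * (((inner ℝ (J (b i)) (b k) : ℝ) * (inner ℝ (J (b j)) (b l) : ℝ)
              - (inner ℝ (J (b j)) (b k) : ℝ) * (inner ℝ (J (b i)) (b l) : ℝ))
                * T ![b i, b j, b k, b l])
          - (2 : ℝ)⁻¹ * (((inner ℝ (J (b i)) (b j) : ℝ) * (inner ℝ (J (b k)) (b l) : ℝ))
                * T ![b i, b j, b k, b l]) := by
      intro i j k l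
      simp only [ICfun, Ifun, g]
      ring
    rw [Finset.sum_congr rfl fun i _ => Finset.sum_congr rfl fun j _ =>
      Finset.sum_congr rfl fun k _ => Finset.sum_congr rfl fun l _ => ptwise i j k l]
    simp only [Finset.sum_sub_distrib, ← Finset.mul_sum]
    rw [key1, key2, key3]
    ring
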